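/- Let 𝕂 be a field and let A be a Weil algebra over 𝕂. Then there exist n, k ∈ ℕ and an ideal I of the polynomial algebra 𝕂[X_1,…,X_n] (= MvPolynomial (Fin n) 𝕂) such that I contains the k-th power of the ideal 𝔪 generated by the variables X_1,…,X_n, and A is isomorphic as a 𝕂-algebra to the quotient 𝕂[X_1,…,X_n]/I. -/

import Mathlib

/-- Every Weil algebra `A` over a field `𝕂` (a nontrivial finite-dimensional commutative
unital `𝕂`-algebra in which every element differs from a scalar by a nilpotent) is
isomorphic to a quotient `𝕂[X_1,…,X_n]/I` of a polynomial algebra by an ideal `I`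
containing a power `𝔪^k` of the ideal `𝔪` generated by the variables. -/
theorem weil_algebra_iso_polynomial_quotient {𝕂 : Type*} [Field 𝕂]
    (A : Type*) [CommRing A] [Algebra 𝕂 A] [Nontrivial A] [FiniteDimensional 𝕂 A]
    (hA : ∀ a : A, ∃ c : 𝕂, IsNilpotent (a - algebraMap 𝕂 A c)) :
    ∃ (n k : ℕ) (I : Ideal (MvPolynomial (Fin n) 𝕂)),
      (Ideal.span (Set.range (MvPolynomial.X : Fin n → MvPolynomial (Fin n) 𝕂))) ^ k ≤ I ∧
      Nonempty ((MvPolynomial (Fin n) 𝕂 ⧸ I) ≃ₐ[𝕂] A) := by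
  classical
  set n := Module.finrank 𝕂 A
  let b : Module.Basis (Fin n) 𝕂 A := Module.finBasis 𝕂 A
  choose c hc using fun i => hA (b i)
  let a : Fin n → A := fun i => b i - algebraMap 𝕂 A (c i)
  let φ : MvPolynomial (Fin n) 𝕂 →ₐ[𝕂] A := MvPolynomial.aeval a
  have ha : ∀ i, IsNilpotent (a i) := hc
  -- surjectivity
  have hsurj : Function.Surjective φ := by
    intro x
    have hx : x ∈ Submodule.span 𝕂 (Set.range b) := by
      rw [b.span_eq]; trivial
    have hsub : Submodule.span 𝕂 (Set.range b) ≤ Subalgebra.toSubmodule φ.range := by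
      rw [Submodule.span_le]
      rintro _ ⟨i, rfl⟩
      have h1 : a i ∈ φ.range := ⟨MvPolynomial.X i, by simp [φ]⟩
      have h2 : algebraMap 𝕂 A (c i) ∈ φ.range := φ.range.algebraMap_mem (c i)
      have : a i + algebraMap 𝕂 A (c i) ∈ φ.range := φ.range.add_mem h1 h2
      simpa [a] using this
    exact hsub hx
  -- nilpotency of the nilradical
  have hnoe : IsNoetherianRing A :=
    isNoetherianRing_of_surjective _ _ φ.toRingHom hsurj
  obtain ⟨k, hk⟩ := IsNoetherianRing.isNilpotent_nilradical A
  refine ⟨n, k, RingHom.ker φ, ?_, ⟨Ideal.quotientKerAlgEquivOfSurjective hsurj⟩⟩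
  have hmap : Ideal.map φ.toRingHom
      (Ideal.span (Set.range (MvPolynomial.X : Fin n → MvPolynomial (Fin n) 𝕂)))
      ≤ nilradical A := by
    rw [Ideal.map_le_iff_le_comap, Ideal.span_le]
    rintro _ ⟨i, rfl⟩
    simpa [φ, mem_nilradical] using ha i
  have hmap2 : Ideal.map φ.toRingHom
      ((Ideal.span (Set.range (MvPolynomial.X : Fin n → MvPolynomial (Fin n) 𝕂))) ^ k) ≤ ⊥ := by
    rw [Ideal.map_pow]
    calc (Ideal.map φ.toRingHom
        (Ideal.span (Set.range (MvPolynomial.X : Fin n → MvPolynomial (Fin n) 𝕂)))) ^ k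
        ≤ (nilradical A) ^ k := Ideal.pow_right_mono hmap k
      _ = ⊥ := hk
  have := Ideal.map_le_iff_le_comap.mp hmap2
  exact fun x hx => this hx
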